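/- Let U ⊆ ℂ be open, let f : ℂ → ℂ be holomorphic on U, let I ⊆ ℝ be an interval, and let z : ℝ → ℂ satisfy: for every t ∈ I, z(t) ∈ U and z has derivative V_f(z(t)) at t. Then the function t ↦ |f(z(t))| is antitone (non-increasing) on I. -/

import Mathlib

open Complex

/-- The desingularized Newton field of `f`. -/
noncomputable def desingNewton (f : ℂ → ℂ) (z : ℂ) : ℂ :=
  -(((1 + ‖f z‖ ^ 4 : ℝ) : ℂ))⁻¹ * (starRingEnd ℂ) (deriv f z) * f z

private lemma desingNewton_val_aux (d w : ℂ) :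
    d * (-(((1 + ‖w‖ ^ 4 : ℝ) : ℂ))⁻¹ * (starRingEnd ℂ) d * w) * (starRingEnd ℂ) w +
        w * (starRingEnd ℂ) (d * (-(((1 + ‖w‖ ^ 4 : ℝ) : ℂ))⁻¹ * (starRingEnd ℂ) d * w)) =
        ((-2 * (1 + ‖w‖ ^ 4)⁻¹ * Complex.normSq d * Complex.normSq w : ℝ) : ℂ) := by
  have h1 : d * (starRingEnd ℂ) d = (Complex.normSq d : ℂ) := Complex.mul_conj d
  have h2 : w * (starRingEnd ℂ) w = (Complex.normSq w : ℂ) := Complex.mul_conj w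
  simp only [map_mul, map_neg, map_inv₀, Complex.conj_conj, Complex.conj_ofReal]
  rw [show ((-2 * (1 + ‖w‖ ^ 4)⁻¹ * Complex.normSq d * Complex.normSq w : ℝ) : ℂ) =
      -2 * (((1 + ‖w‖ ^ 4 : ℝ) : ℂ))⁻¹ * (Complex.normSq d : ℂ) * (Complex.normSq w : ℂ) by
    push_cast; ring]
  rw [← h1, ← h2]
  ring

/-- Along a trajectory of the desingularized Newton flow,
`|f(z(t))|` is non-increasing. -/
theorem desingNewton_abs_antitone
    (U : Set ℂ) (hU : IsOpen U) (f : ℂ → ℂ) (hf : DifferentiableOn ℂ f U)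
    (I : Set ℝ) (hI : I.OrdConnected)
    (z : ℝ → ℂ)
    (hz : ∀ t ∈ I, z t ∈ U ∧ HasDerivAt z (desingNewton f (z t)) t) :
    AntitoneOn (fun t => ‖f (z t)‖) I := by
  set g : ℝ → ℝ := fun t => Complex.normSq (f (z t)) with hg
  have key : ∀ t ∈ I, ∃ v ≤ 0, HasDerivAt g v t := by
    intro t ht
    obtain ⟨hzU, hzd⟩ := hz t ht
    have hfd : DifferentiableAt ℂ f (z t) := hf.differentiableAt (hU.mem_nhds hzU)
    have hw : HasDerivAt (fun t => f (z t)) (deriv f (z t) * desingNewton f (z t)) t := by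
      have := (hfd.hasFDerivAt.restrictScalars ℝ).comp_hasDerivAt t hzd
      convert this using 1
      · rfl
      · rfl
      · rw [ContinuousLinearMap.coe_restrictScalars', hfd.hasDerivAt.hasFDerivAt.fderiv,
          ContinuousLinearMap.toSpanSingleton_apply, smul_eq_mul, mul_comm]
    have hwc : HasDerivAt (fun t => (starRingEnd ℂ) (f (z t)))
        ((starRingEnd ℂ) (deriv f (z t) * desingNewton f (z t))) t := hw.star
    have hmul := hw.mul hwc
    have hre := Complex.reCLM.hasFDerivAt.comp_hasDerivAt t hmul
    have hgeq : (fun t => (f (z t) * (starRingEnd ℂ) (f (z t))).re) = g := by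
      funext s; simp [hg, Complex.mul_conj]
    rw [show (Complex.reCLM ∘ ((fun t => f (z t)) * fun t => (starRingEnd ℂ) (f (z t)))) =
        (fun t => (f (z t) * (starRingEnd ℂ) (f (z t))).re) from rfl, hgeq] at hre
    refine ⟨_, ?_, hre⟩
    have hval := desingNewton_val_aux (deriv f (z t)) (f (z t))
    simp only [desingNewton] at hre ⊢
    rw [show Complex.reCLM
        (deriv f (z t) *
            (-(((1 + ‖f (z t)‖ ^ 4 : ℝ) : ℂ))⁻¹ * (starRingEnd ℂ) (deriv f (z t)) *
              f (z t)) *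
          (starRingEnd ℂ) (f (z t)) +
        f (z t) *
          (starRingEnd ℂ)
            (deriv f (z t) *
              (-(((1 + ‖f (z t)‖ ^ 4 : ℝ) : ℂ))⁻¹ * (starRingEnd ℂ) (deriv f (z t)) *
                f (z t)))) =
        (-2 * (1 + ‖f (z t)‖ ^ 4)⁻¹ * Complex.normSq (deriv f (z t)) *
          Complex.normSq (f (z t)) : ℝ) by
      rw [show (Complex.reCLM : ℂ → ℝ) = Complex.re from rfl]
      rw [hval, Complex.ofReal_re]]
    have h0 : (0:ℝ) ≤ 2 * (1 + ‖f (z t)‖ ^ 4)⁻¹ * Complex.normSq (deriv f (z t)) *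
        Complex.normSq (f (z t)) := by
      have hc : (0:ℝ) < 1 + ‖f (z t)‖ ^ 4 := by positivity
      exact mul_nonneg (mul_nonneg (mul_nonneg (by norm_num) (inv_nonneg.mpr hc.le))
        (Complex.normSq_nonneg _)) (Complex.normSq_nonneg _)
    linarith
  have hcont : ContinuousOn g I := fun t ht =>
    ((key t ht).choose_spec.2.continuousAt).continuousWithinAt
  have hdiff : DifferentiableOn ℝ g (interior I) := fun t ht =>
    ((key t (interior_subset ht)).choose_spec.2.differentiableAt).differentiableWithinAt
  have hganti : AntitoneOn g I := by
    refine antitoneOn_of_deriv_nonpos hI.convex hcont hdiff ?_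
    intro x hx
    obtain ⟨v, hv0, hvd⟩ := key x (interior_subset hx)
    rw [hvd.deriv]; exact hv0
  intro a ha b hb hab
  simp only [Complex.norm_def]
  exact Real.sqrt_le_sqrt (hganti ha hb hab)
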